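/- Let p be a prime, g a primitive root mod p, and let K' be the (p-1)×(p-1) left-circulant matrix with first row (K(1), K(g), K(g^2), ..., K(g^{p-2})), where K is the Kloosterman sum over F_p. Then |det K'| = p^{p-2}. -/

import Mathlib

/-- The Kloosterman sum over the prime field `F_p`. -/
noncomputable def kloosterman (p : ℕ) [Fact p.Prime] (u : ZMod p) : ℂ :=
  ∑ x ∈ (Finset.univ \ {0} : Finset (ZMod p)),
    Complex.exp (2 * Real.pi * Complex.I * ((x + u * x⁻¹).val : ℂ) / p)

open Finset

namespace KlAux

variable (p : ℕ) [Fact p.Prime]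

lemma kloosterman_eq (u : ZMod p) :
    kloosterman p u
      = ∑ x ∈ (Finset.univ \ {0} : Finset (ZMod p)), ZMod.stdAddChar (x + u * x⁻¹) := by
  refine Finset.sum_congr rfl fun x _ => ?_
  rw [ZMod.stdAddChar_apply, ZMod.toCircle_apply]

lemma sum_units_eq (F : ZMod p → ℂ) :
    ∑ u : (ZMod p)ˣ, F ↑u = ∑ x ∈ (Finset.univ \ {0} : Finset (ZMod p)), F x := by
  refine Finset.sum_bij' (fun (u : (ZMod p)ˣ) (_ : u ∈ univ) => (u : ZMod p))
    (fun x hx => Units.mk0 x (by simpa using (Finset.mem_sdiff.mp hx).2)) ?_ ?_ ?_ ?_ ?_ <;>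
    simp [Finset.mem_sdiff]

lemma sum_std_mul (t : ZMod p) :
    ∑ u : ZMod p, ZMod.stdAddChar (u * t) = if t = 0 then (p : ℂ) else 0 := by
  rw [AddChar.sum_mulShift t (ZMod.isPrimitive_stdAddChar p)]
  simp [ZMod.card]

lemma sum_std_mul_D (t : ZMod p) :
    ∑ u ∈ (Finset.univ \ {0} : Finset (ZMod p)), ZMod.stdAddChar (u * t)
      = (if t = 0 then (p : ℂ) else 0) - 1 := by
  rw [Finset.sum_sdiff_eq_sub (Finset.subset_univ _), sum_std_mul]
  simp

lemma sum_std_D :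
    ∑ x ∈ (Finset.univ \ {0} : Finset (ZMod p)), ZMod.stdAddChar x = -1 := by
  have h := sum_std_mul_D p 1
  simp only [mul_one] at h
  rw [h, if_neg (one_ne_zero)]
  ring

lemma sum_kl_mul (c : (ZMod p)ˣ) :
    ∑ u : (ZMod p)ˣ, kloosterman p (↑c * ↑u) * kloosterman p ↑u
      = if (c : ZMod p) = 1 then (p : ℂ) ^ 2 - p - 1 else -(p : ℂ) - 1 := by
  classical
  have hc0 : (c : ZMod p) ≠ 0 := c.ne_zero
  rw [sum_units_eq p (fun u => kloosterman p (↑c * u) * kloosterman p u)]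
  have step1 : ∀ u ∈ (Finset.univ \ {0} : Finset (ZMod p)),
      kloosterman p (↑c * u) * kloosterman p u
      = ∑ x ∈ (Finset.univ \ {0} : Finset (ZMod p)),
          ∑ y ∈ (Finset.univ \ {0} : Finset (ZMod p)),
            ZMod.stdAddChar ((x + y) + u * ((c : ZMod p) * x⁻¹ + y⁻¹)) := by
    intro u _
    rw [kloosterman_eq, kloosterman_eq, Finset.sum_mul_sum]
    refine Finset.sum_congr rfl fun x _ => Finset.sum_congr rfl fun y _ => ?_
    rw [← AddChar.map_add_eq_mul]
    congr 1
    ring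
  rw [Finset.sum_congr rfl step1, Finset.sum_comm]
  rw [Finset.sum_congr rfl (fun x _ => Finset.sum_comm)]
  have step3 : ∀ x ∈ (Finset.univ \ {0} : Finset (ZMod p)),
      ∀ y ∈ (Finset.univ \ {0} : Finset (ZMod p)),
      (∑ u ∈ (Finset.univ \ {0} : Finset (ZMod p)),
          ZMod.stdAddChar ((x + y) + u * ((c : ZMod p) * x⁻¹ + y⁻¹)))
        = ZMod.stdAddChar (x + y) *
            ((if ((c : ZMod p) * x⁻¹ + y⁻¹) = 0 then (p : ℂ) else 0) - 1) := by
    intro x _ y _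
    simp_rw [AddChar.map_add_eq_mul, ← Finset.mul_sum, sum_std_mul_D]
  rw [Finset.sum_congr rfl fun x hx => Finset.sum_congr rfl fun y hy => step3 x hx y hy]
  have split : ∑ x ∈ (Finset.univ \ {0} : Finset (ZMod p)),
      ∑ y ∈ (Finset.univ \ {0} : Finset (ZMod p)), ZMod.stdAddChar (x + y) *
        ((if ((c : ZMod p) * x⁻¹ + y⁻¹) = 0 then (p : ℂ) else 0) - 1)
      = (∑ x ∈ (Finset.univ \ {0} : Finset (ZMod p)),
          ∑ y ∈ (Finset.univ \ {0} : Finset (ZMod p)), ZMod.stdAddChar (x + y) *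
            (if ((c : ZMod p) * x⁻¹ + y⁻¹) = 0 then (p : ℂ) else 0))
        - (∑ x ∈ (Finset.univ \ {0} : Finset (ZMod p)), ZMod.stdAddChar x) *
          (∑ y ∈ (Finset.univ \ {0} : Finset (ZMod p)), ZMod.stdAddChar y) := by
    rw [Finset.sum_mul_sum, ← Finset.sum_sub_distrib]
    refine Finset.sum_congr rfl fun x _ => ?_
    rw [← Finset.sum_sub_distrib]
    refine Finset.sum_congr rfl fun y _ => ?_
    rw [AddChar.map_add_eq_mul]
    ring
  rw [split, sum_std_D]
  have partA : ∀ x ∈ (Finset.univ \ {0} : Finset (ZMod p)),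
      (∑ y ∈ (Finset.univ \ {0} : Finset (ZMod p)), ZMod.stdAddChar (x + y) *
        (if ((c : ZMod p) * x⁻¹ + y⁻¹) = 0 then (p : ℂ) else 0))
      = ZMod.stdAddChar (x * (1 - (↑c⁻¹ : ZMod p))) * (p : ℂ) := by
    intro x hx
    have hx0 : x ≠ 0 := by simpa using (Finset.mem_sdiff.mp hx).2
    have hci : (↑c⁻¹ : ZMod p) ≠ 0 := c⁻¹.ne_zero
    have key : ∀ y, y ≠ 0 → (((c : ZMod p) * x⁻¹ + y⁻¹ = 0) ↔ y = -(↑c⁻¹ : ZMod p) * x) := by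
      intro y hy0
      constructor
      · intro h
        have h1 : y⁻¹ = -((c : ZMod p) * x⁻¹) := by linear_combination h
        have h2 : y = (-((c : ZMod p) * x⁻¹))⁻¹ := by rw [← h1, inv_inv]
        rw [h2, inv_neg, mul_inv, inv_inv, Units.val_inv_eq_inv_val]
        ring
      · rintro rfl
        rw [Units.val_inv_eq_inv_val, mul_inv, inv_neg, inv_inv]
        ring
    calc (∑ y ∈ (Finset.univ \ {0} : Finset (ZMod p)), ZMod.stdAddChar (x + y) *
            (if ((c : ZMod p) * x⁻¹ + y⁻¹) = 0 then (p : ℂ) else 0))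
        = ∑ y ∈ (Finset.univ \ {0} : Finset (ZMod p)),
            (if y = -(↑c⁻¹ : ZMod p) * x then ZMod.stdAddChar (x + y) * (p : ℂ) else 0) := by
          refine Finset.sum_congr rfl fun y hy => ?_
          have hy0 : y ≠ 0 := by simpa using (Finset.mem_sdiff.mp hy).2
          by_cases h : y = -(↑c⁻¹ : ZMod p) * x
          · rw [if_pos h, if_pos ((key y hy0).mpr h)]
          · rw [if_neg h, if_neg (fun hh => h ((key y hy0).mp hh)), mul_zero]
      _ = ZMod.stdAddChar (x + -(↑c⁻¹ : ZMod p) * x) * (p : ℂ) := by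
          rw [Finset.sum_ite_eq' (Finset.univ \ {0} : Finset (ZMod p))
            (-(↑c⁻¹ : ZMod p) * x) (fun y => ZMod.stdAddChar (x + y) * (p : ℂ))]
          rw [if_pos]
          simp only [Finset.mem_sdiff, Finset.mem_univ, Finset.mem_singleton, true_and]
          exact mul_ne_zero (neg_ne_zero.mpr hci) hx0
      _ = ZMod.stdAddChar (x * (1 - (↑c⁻¹ : ZMod p))) * (p : ℂ) := by
          congr 2
          ring
  rw [Finset.sum_congr rfl partA, ← Finset.sum_mul]
  have hmul : ∀ x : ZMod p, x * (1 - (↑c⁻¹ : ZMod p)) = x * (1 - (↑c⁻¹ : ZMod p)) := fun _ => rfl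
  rw [sum_std_mul_D p (1 - (↑c⁻¹ : ZMod p))]
  have hcond : (1 - (↑c⁻¹ : ZMod p) = 0) ↔ ((c : ZMod p) = 1) := by
    rw [sub_eq_zero, eq_comm]
    constructor
    · intro h
      have h1 : (c⁻¹ : (ZMod p)ˣ) = 1 := Units.ext (by rw [Units.val_one]; exact h)
      have h2 : c = 1 := inv_eq_one.mp h1
      rw [h2, Units.val_one]
    · intro h
      have h2 : c = 1 := Units.ext (by rw [Units.val_one]; exact h)
      rw [h2, inv_one, Units.val_one]
  by_cases hc1 : (c : ZMod p) = 1
  · rw [if_pos (hcond.mpr hc1), if_pos hc1]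
    ring
  · rw [if_neg (fun h => hc1 (hcond.mp h)), if_neg hc1]
    ring

end KlAux

open Matrix in
theorem abs_det_kloosterman_circulant (p : ℕ) [Fact p.Prime] (g : (ZMod p)ˣ)
    (hg : orderOf g = p - 1) :
    ‖Matrix.det (Matrix.of fun s l : Fin (p - 1) =>
      kloosterman p ((g : ZMod p) ^ ((s.val + l.val) % (p - 1))))‖ = (p : ℝ) ^ (p - 2) := by
  classical
  have hp : p.Prime := Fact.out
  have hp2 : 2 ≤ p := hp.two_le
  set n := p - 1 with hn
  set A : Matrix (Fin n) (Fin n) ℂ := Matrix.of (fun s l : Fin n =>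
    kloosterman p ((g : ZMod p) ^ ((s.val + l.val) % n))) with hA
  have hord : orderOf (g : ZMod p) = n := by rw [orderOf_units, hg]
  have hcard : Fintype.card (ZMod p)ˣ = n := by
    rw [ZMod.card_units_eq_totient, Nat.totient_prime hp]
  have hpowinj : ∀ a b : Fin n, g ^ (a : ℕ) = g ^ (b : ℕ) → a = b := by
    intro a b hab
    exact Fin.ext (pow_injOn_Iio_orderOf (x := g)
      (by rw [hg]; exact a.isLt) (by rw [hg]; exact b.isLt) hab)
  have hbij : Function.Bijective (fun l : Fin n => g ^ (l : ℕ)) := by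
    rw [Fintype.bijective_iff_injective_and_card]
    exact ⟨fun a b hab => hpowinj a b hab, by simp [hcard]⟩
  have hpowmod : ∀ k : ℕ, (g : ZMod p) ^ (k % n) = (g : ZMod p) ^ k := by
    intro k
    rw [← hord, pow_mod_orderOf]
  have hentry : ∀ s l : Fin n,
      A s l = kloosterman p ((g ^ (s : ℕ) * g ^ (l : ℕ) : (ZMod p)ˣ) : ZMod p) := by
    intro s l
    have harg : ((g : ZMod p)) ^ ((s.val + l.val) % n)
        = ((g ^ (s : ℕ) * g ^ (l : ℕ) : (ZMod p)ˣ) : ZMod p) := by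
      rw [Units.val_mul, Units.val_pow_eq_pow_val, Units.val_pow_eq_pow_val, ← pow_add, hpowmod]
    show kloosterman p ((g : ZMod p) ^ ((s.val + l.val) % n)) = _
    rw [harg]
  have hAA : ∀ s t : Fin n,
      (A * A) s t = if s = t then (p : ℂ) ^ 2 - p - 1 else -(p : ℂ) - 1 := by
    intro s t
    rw [Matrix.mul_apply]
    set c : (ZMod p)ˣ := g ^ (s : ℕ) * (g ^ (t : ℕ))⁻¹ with hc
    have hterm : ∀ j : Fin n, A s j * A j t
        = (fun u : (ZMod p)ˣ => kloosterman p ((c : ZMod p) * (u : ZMod p))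
            * kloosterman p (u : ZMod p)) ((fun j : Fin n => g ^ (t : ℕ) * g ^ (j : ℕ)) j) := by
      intro j
      show A s j * A j t = kloosterman p ((c : ZMod p) * ((g ^ (t : ℕ) * g ^ (j : ℕ) : (ZMod p)ˣ) : ZMod p))
          * kloosterman p ((g ^ (t : ℕ) * g ^ (j : ℕ) : (ZMod p)ˣ) : ZMod p)
      rw [hentry s j, hentry j t]
      congr 2
      · rw [← Units.val_mul]
        congr 1
        rw [hc]
        group
      · rw [mul_comm]
    rw [Finset.sum_congr rfl fun j _ => hterm j]
    have hbij2 : Function.Bijective (fun j : Fin n => g ^ (t : ℕ) * g ^ (j : ℕ)) :=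
      (Group.mulLeft_bijective (g ^ (t : ℕ))).comp hbij
    rw [Fintype.sum_bijective _ hbij2 _
      (fun u : (ZMod p)ˣ => kloosterman p ((c : ZMod p) * (u : ZMod p))
        * kloosterman p (u : ZMod p)) (fun j => rfl)]
    rw [KlAux.sum_kl_mul p c]
    have hc1 : ((c : ZMod p) = 1) ↔ s = t := by
      rw [Units.val_eq_one, hc, mul_inv_eq_one]
      exact ⟨hpowinj s t, fun h => by rw [h]⟩
    by_cases hst : s = t
    · rw [if_pos (hc1.mpr hst), if_pos hst]
    · rw [if_neg (fun h => hst (hc1.mp h)), if_neg hst]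
  have hpC : (p : ℂ) ≠ 0 := Nat.cast_ne_zero.mpr hp.pos.ne'
  have hdetAA : (A * A).det = (p : ℂ) ^ (2 * (p - 2)) := by
    set u : Fin n → ℂ := fun _ => (-(p : ℂ) - 1) / (p : ℂ) ^ 2 with hu
    set v : Fin n → ℂ := fun _ => (1 : ℂ) with hv
    have hcr : ∀ s t : Fin n, (Matrix.replicateCol Unit u * Matrix.replicateRow Unit v) s t = u s * v t := by
      intro s t
      rw [Matrix.mul_apply]
      simp [Matrix.replicateCol_apply, Matrix.replicateRow_apply]
    have hMeq : A * A = ((p : ℂ) ^ 2) • (1 + Matrix.replicateCol Unit u * Matrix.replicateRow Unit v) := by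
      ext s t
      rw [hAA s t]
      rw [Matrix.smul_apply, Matrix.add_apply, hcr s t, smul_eq_mul]
      rcases eq_or_ne s t with h | h
      · subst h
        rw [Matrix.one_apply_eq, if_pos rfl, hu, hv]
        field_simp
        ring
      · rw [Matrix.one_apply_ne h, if_neg h, hu, hv]
        field_simp
        ring
    rw [hMeq, Matrix.det_smul, Matrix.det_one_add_replicateCol_mul_replicateRow]
    have hdot : v ⬝ᵥ u = ((p : ℂ) - 1) * ((-(p : ℂ) - 1) / (p : ℂ) ^ 2) := by
      rw [hu, hv]
      simp only [dotProduct, one_mul, Finset.sum_const, Finset.card_univ,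
        Fintype.card_fin, nsmul_eq_mul]
      rw [hn, Nat.cast_sub hp.one_le, Nat.cast_one]
    rw [hdot, Fintype.card_fin]
    have hval : (1 : ℂ) + ((p : ℂ) - 1) * ((-(p : ℂ) - 1) / (p : ℂ) ^ 2)
        = 1 / (p : ℂ) ^ 2 := by
      field_simp
      ring
    rw [hval, ← pow_mul]
    have h2n : 2 * n = 2 * (p - 2) + 2 := by omega
    rw [h2n, pow_add]
    field_simp
  have hdet2 : ‖A.det‖ ^ 2 = ((p : ℝ) ^ (p - 2)) ^ 2 := by
    rw [sq, ← norm_mul, ← Matrix.det_mul, hdetAA, norm_pow, Complex.norm_natCast, ← pow_mul,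
      mul_comm (p - 2) 2]
  have h0 : (0 : ℝ) ≤ ‖A.det‖ := norm_nonneg _
  have h1 : (0 : ℝ) ≤ (p : ℝ) ^ (p - 2) := by positivity
  have hfin := congrArg Real.sqrt hdet2
  rwa [Real.sqrt_sq h0, Real.sqrt_sq h1] at hfin
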